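/- Let s⋆ be a unit vector in a real inner product space H, V a closed linear subspace of H, and S the unit sphere of V. Then inf_{s ∈ S} ‖s⋆ − s‖² ≤ 2 inf_{v ∈ V} ‖s⋆ − v‖². -/

import Mathlib

/-- If `s⋆` is a unit vector of a real inner product space and `S` is the unit sphere of a
closed subspace `V` (assumed nonempty), then `inf_{s∈S} ‖s⋆−s‖² ≤ 2 inf_{v∈V} ‖s⋆−v‖²`. -/
theorem stmt8 {H : Type*} [NormedAddCommGroup H] [InnerProductSpace ℝ H]
    (V : Submodule ℝ H) (hV : IsClosed (V : Set H))
    (sstar : H) (hs : ‖sstar‖ = 1) (hne : ∃ v ∈ V, ‖v‖ = 1) :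
    sInf ((fun s => ‖sstar - s‖ ^ 2) '' {v ∈ (V : Set H) | ‖v‖ = 1}) ≤
      2 * sInf ((fun v => ‖sstar - v‖ ^ 2) '' (V : Set H)) := by
  obtain ⟨s0, hs0V, hs0n⟩ := hne
  set A := sInf ((fun s => ‖sstar - s‖ ^ 2) '' {v ∈ (V : Set H) | ‖v‖ = 1}) with hA
  have hbdd : BddBelow ((fun s => ‖sstar - s‖ ^ 2) '' {v ∈ (V : Set H) | ‖v‖ = 1}) := by
    refine ⟨0, ?_⟩
    rintro x ⟨y, _, rfl⟩
    positivity
  -- key pointwise bound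
  have key : ∀ v ∈ V, A ≤ 2 * ‖sstar - v‖ ^ 2 := by
    intro v hv
    have hfind : ∃ s, s ∈ V ∧ ‖s‖ = 1 ∧ ‖sstar - s‖ ^ 2 ≤ 2 * ‖sstar - v‖ ^ 2 := by
      have expand : ∀ s : H, ‖s‖ = 1 → ‖sstar - s‖ ^ 2 = 2 - 2 * inner ℝ sstar s := by
        intro s hsn
        rw [@norm_sub_sq_real, hs, hsn]; ring
      have expandv : ‖sstar - v‖ ^ 2 = 1 - 2 * inner ℝ sstar v + ‖v‖ ^ 2 := by
        rw [@norm_sub_sq_real, hs]; ring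
      by_cases hv0 : v = 0
      · subst hv0
        rcases le_or_gt (0 : ℝ) (inner ℝ sstar s0) with h | h
        · refine ⟨s0, hs0V, hs0n, ?_⟩
          rw [expand s0 hs0n, expandv]
          simp only [inner_zero_right, norm_zero]
          linarith
        · refine ⟨-s0, neg_mem hs0V, by simpa using hs0n, ?_⟩
          rw [expand (-s0) (by simpa using hs0n), expandv]
          simp only [inner_zero_right, norm_zero, inner_neg_right]
          linarith
      · have hr : (0 : ℝ) < ‖v‖ := norm_pos_iff.mpr hv0
        set r := ‖v‖ with hrdef
        set t : ℝ := inner ℝ sstar v with ht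
        have htr : |t| ≤ r := by
          have := abs_real_inner_le_norm sstar v
          rwa [hs, one_mul] at this
        have hsn : ‖r⁻¹ • v‖ = 1 := by
          rw [norm_smul, Real.norm_eq_abs, abs_of_pos (inv_pos.mpr hr)]
          exact inv_mul_cancel₀ hr.ne'
        have hinner : (inner ℝ sstar (r⁻¹ • v) : ℝ) = r⁻¹ * t := real_inner_smul_right _ _ _
        rcases le_or_gt (0 : ℝ) t with hpos | hneg
        · refine ⟨r⁻¹ • v, V.smul_mem _ hv, hsn, ?_⟩
          rw [expand _ hsn, expandv, hinner]
          -- need: 2 - 2 * (r⁻¹ * t) ≤ 2 * (1 - 2*t + r^2)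
          have h1 : t ≤ r := le_trans (le_abs_self t) htr
          have hgoal : 2 * t * r - t ≤ r ^ 3 := by
            rcases le_or_gt (2 * r) 1 with hr2 | hr2
            · nlinarith [mul_nonneg hpos (sub_nonneg.mpr hr2), pow_pos hr 3]
            · nlinarith [mul_nonneg hr.le (sq_nonneg (r - 1)),
                mul_nonneg (sub_nonneg.mpr h1) (sub_nonneg.mpr hr2.le)]
          have hu : r * r⁻¹ = 1 := mul_inv_cancel₀ hr.ne'
          nlinarith [mul_nonneg (inv_pos.mpr hr).le (sub_nonneg.mpr hgoal), hu,
            mul_nonneg (inv_pos.mpr hr).le hpos, sq_nonneg (r * r⁻¹ - 1)]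
        · refine ⟨-(r⁻¹ • v), neg_mem (V.smul_mem _ hv), by simpa using hsn, ?_⟩
          rw [expand _ (by simpa using hsn), expandv, inner_neg_right, hinner]
          have : r⁻¹ * t < 0 := mul_neg_of_pos_of_neg (inv_pos.mpr hr) hneg
          nlinarith [sq_nonneg r]
    obtain ⟨s, hsV, hsn1, hle⟩ := hfind
    calc A ≤ ‖sstar - s‖ ^ 2 := csInf_le hbdd ⟨s, ⟨hsV, hsn1⟩, rfl⟩
    _ ≤ 2 * ‖sstar - v‖ ^ 2 := hle
  -- conclude
  have hne' : ((fun v => ‖sstar - v‖ ^ 2) '' (V : Set H)).Nonempty :=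
    ⟨_, ⟨0, V.zero_mem, rfl⟩⟩
  have hlb : A / 2 ≤ sInf ((fun v => ‖sstar - v‖ ^ 2) '' (V : Set H)) := by
    apply le_csInf hne'
    rintro x ⟨v, hv, rfl⟩
    linarith [key v hv]
  linarith
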